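/- Let C^v = V·C with V = diag(a+ib, a-ib), C = [[C11, C12],[C12, C11]], where a, b, C11, C12 are real, a > 0, C12 < 0, C11 > -C12. Define b₀ = a·|C12| / sqrt(C11² - C12²). Then: (i) if 0 ≤ b < b₀ the matrix C^v has two distinct real eigenvalues; (ii) if b > b₀ it has two distinct non-real eigenvalues which are complex conjugates of each other; (iii) if b = b₀ it has a single eigenvalue a·C11 of algebraic multiplicity 2. -/

import Mathlib

open Matrix Complex

noncomputable def Cv0 (a b C11 C12 : ℝ) : Matrix (Fin 2) (Fin 2) ℂ :=
  !![((a : ℂ) + Complex.I * b) * (C11 : ℂ), ((a : ℂ) + Complex.I * b) * (C12 : ℂ);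
     ((a : ℂ) - Complex.I * b) * (C12 : ℂ), ((a : ℂ) - Complex.I * b) * (C11 : ℂ)]

lemma det_eq (a b C11 C12 : ℝ) (lam : ℂ) :
    (Cv0 a b C11 C12 - lam • (1 : Matrix (Fin 2) (Fin 2) ℂ)).det =
      (lam - ((a * C11 : ℝ) : ℂ))^2 - ((a^2*C12^2 - b^2*(C11^2 - C12^2) : ℝ) : ℂ) := by
  simp [Cv0, Matrix.det_fin_two, Matrix.sub_apply, Matrix.smul_apply, Matrix.one_apply,
    smul_eq_mul]
  ring_nf
  simp [Complex.I_sq]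
  ring

theorem stmt1 (a b C11 C12 : ℝ) (ha : 0 < a) (h12 : C12 < 0) (h11 : -C12 < C11)
    (b0 : ℝ) (hb0 : b0 = a * |C12| / Real.sqrt (C11 ^ 2 - C12 ^ 2)) :
    -- (i) two distinct real eigenvalues when 0 ≤ b < b₀
    (0 ≤ b → b < b0 →
      ∃ l1 l2 : ℝ, l1 ≠ l2 ∧
        (Cv0 a b C11 C12 - (l1 : ℂ) • (1 : Matrix (Fin 2) (Fin 2) ℂ)).det = 0 ∧
        (Cv0 a b C11 C12 - (l2 : ℂ) • (1 : Matrix (Fin 2) (Fin 2) ℂ)).det = 0 ∧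
        ∀ lam : ℂ, (Cv0 a b C11 C12 - lam • (1 : Matrix (Fin 2) (Fin 2) ℂ)).det = 0 →
          lam = (l1 : ℂ) ∨ lam = (l2 : ℂ)) ∧
    -- (ii) two distinct non-real conjugate eigenvalues when b > b₀
    (b0 < b →
      ∃ lam : ℂ, lam.im ≠ 0 ∧
        (Cv0 a b C11 C12 - lam • (1 : Matrix (Fin 2) (Fin 2) ℂ)).det = 0 ∧
        (Cv0 a b C11 C12 - (starRingEnd ℂ lam) • (1 : Matrix (Fin 2) (Fin 2) ℂ)).det = 0 ∧
        lam ≠ starRingEnd ℂ lam ∧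
        ∀ mu : ℂ, (Cv0 a b C11 C12 - mu • (1 : Matrix (Fin 2) (Fin 2) ℂ)).det = 0 →
          mu = lam ∨ mu = starRingEnd ℂ lam) ∧
    -- (iii) single eigenvalue a·C11 of algebraic multiplicity 2 when b = b₀
    (b = b0 →
      ∀ lam : ℂ, (Cv0 a b C11 C12 - lam • (1 : Matrix (Fin 2) (Fin 2) ℂ)).det =
        (lam - ((a * C11 : ℝ) : ℂ)) ^ 2) := by
  have h11pos : 0 < C11 := lt_trans (by linarith) h11
  have hD2 : 0 < C11 ^ 2 - C12 ^ 2 := by nlinarith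
  have hb0pos : 0 < b0 := by
    rw [hb0]
    exact div_pos (mul_pos ha (abs_pos.mpr (ne_of_lt h12))) (Real.sqrt_pos.mpr hD2)
  have hb0sq : b0 ^ 2 = a ^ 2 * C12 ^ 2 / (C11 ^ 2 - C12 ^ 2) := by
    rw [hb0, div_pow, mul_pow, _root_.sq_abs, Real.sq_sqrt hD2.le]
  have hKeq : a ^ 2 * C12 ^ 2 - b ^ 2 * (C11 ^ 2 - C12 ^ 2)
      = (C11 ^ 2 - C12 ^ 2) * (b0 ^ 2 - b ^ 2) := by
    rw [hb0sq]; field_simp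
  refine ⟨?_, ?_, ?_⟩
  · -- case (i)
    intro hb0le hbb0
    have hKpos : 0 < a ^ 2 * C12 ^ 2 - b ^ 2 * (C11 ^ 2 - C12 ^ 2) := by
      rw [hKeq]
      have : b ^ 2 < b0 ^ 2 := by nlinarith
      nlinarith
    set s := Real.sqrt (a ^ 2 * C12 ^ 2 - b ^ 2 * (C11 ^ 2 - C12 ^ 2)) with hs
    have hspos : 0 < s := Real.sqrt_pos.mpr hKpos
    have hsr : s ^ 2 = a ^ 2 * C12 ^ 2 - b ^ 2 * (C11 ^ 2 - C12 ^ 2) :=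
      Real.sq_sqrt hKpos.le
    have hssq : (s : ℂ) ^ 2 = (a:ℂ)^2*(C12:ℂ)^2 - (b:ℂ)^2*((C11:ℂ)^2 - (C12:ℂ)^2) := by
      exact_mod_cast congrArg (fun x : ℝ => (x : ℂ)) hsr
    refine ⟨a * C11 + s, a * C11 - s, by intro h; nlinarith [hspos], ?_, ?_, ?_⟩
    · rw [det_eq]; push_cast; linear_combination hssq
    · rw [det_eq]; push_cast; linear_combination hssq
    · intro lam hlam
      rw [det_eq] at hlam; push_cast at hlam
      have key : (lam - ((a * C11 + s : ℝ) : ℂ)) * (lam - ((a * C11 - s : ℝ) : ℂ)) = 0 := by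
        push_cast
        linear_combination hlam - hssq
      rcases mul_eq_zero.mp key with h | h
      · left; linear_combination h
      · right; linear_combination h
  · -- case (ii)
    intro hbb0
    have hKneg : a ^ 2 * C12 ^ 2 - b ^ 2 * (C11 ^ 2 - C12 ^ 2) < 0 := by
      rw [hKeq]
      have : b0 ^ 2 < b ^ 2 := by nlinarith
      nlinarith
    set s := Real.sqrt (b ^ 2 * (C11 ^ 2 - C12 ^ 2) - a ^ 2 * C12 ^ 2) with hs
    have hspos : 0 < s := Real.sqrt_pos.mpr (by linarith)
    have hsr : s ^ 2 = b ^ 2 * (C11 ^ 2 - C12 ^ 2) - a ^ 2 * C12 ^ 2 :=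
      Real.sq_sqrt (by linarith)
    have hssq : (s : ℂ) ^ 2 = (b:ℂ)^2*((C11:ℂ)^2 - (C12:ℂ)^2) - (a:ℂ)^2*(C12:ℂ)^2 := by
      exact_mod_cast congrArg (fun x : ℝ => (x : ℂ)) hsr
    set lam : ℂ := ((a * C11 : ℝ) : ℂ) + Complex.I * s with hlam
    have him : lam.im = s := by simp [hlam]
    have hconj : starRingEnd ℂ lam = ((a * C11 : ℝ) : ℂ) - Complex.I * s := by
      rw [hlam, map_add, _root_.map_mul, Complex.conj_I, Complex.conj_ofReal,
        Complex.conj_ofReal]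
      ring
    refine ⟨lam, by rw [him]; exact ne_of_gt hspos, ?_, ?_, ?_, ?_⟩
    · rw [det_eq, hlam]; push_cast
      linear_combination (s:ℂ)^2 * Complex.I_sq - hssq
    · rw [det_eq, hconj]; push_cast
      linear_combination (s:ℂ)^2 * Complex.I_sq - hssq
    · intro h
      have h2 := congrArg Complex.im h
      rw [him, hconj] at h2
      simp at h2
      linarith
    · intro mu hmu
      rw [det_eq] at hmu; push_cast at hmu
      have key : (mu - lam) * (mu - starRingEnd ℂ lam) = 0 := by
        rw [hconj, hlam]; push_cast
        linear_combination hmu - (s:ℂ)^2 * Complex.I_sq + hssq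
      rcases mul_eq_zero.mp key with h | h
      · left; linear_combination h
      · right; linear_combination h
  · -- case (iii)
    intro hbeq lam
    have hK0 : a ^ 2 * C12 ^ 2 - b ^ 2 * (C11 ^ 2 - C12 ^ 2) = 0 := by
      rw [hbeq, hb0sq]; field_simp; ring
    rw [det_eq, hK0]
    simp
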